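/- Let f : ℝ → ℝ be a nonnegative function whose support S is an interval, continuous on S, satisfying the ratio condition f(a+c)*f(b) ≥ f(b+c)*f(a) for all a ≤ b, c ≥ 0 with all four values positive. Then log f is concave on S. -/

import Mathlib

/-- Dyadic concavity from midpoint concavity on a convex set. -/
lemma midpoint_to_dyadic (g : ℝ → ℝ) (S : Set ℝ) (hS : Convex ℝ S)
    (hmid : ∀ u ∈ S, ∀ v ∈ S, (g u + g v) / 2 ≤ g ((u + v) / 2)) :
    ∀ n k : ℕ, k ≤ 2 ^ n → ∀ x ∈ S, ∀ y ∈ S,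
      (1 - (k : ℝ) / 2 ^ n) * g x + ((k : ℝ) / 2 ^ n) * g y ≤
        g ((1 - (k : ℝ) / 2 ^ n) * x + ((k : ℝ) / 2 ^ n) * y) := by
  intro n
  induction n with
  | zero =>
    intro k hk x hx y hy
    interval_cases k
    · norm_num
    · norm_num
  | succ n ih =>
    have key : ∀ k : ℕ, k ≤ 2 ^ n → ∀ x ∈ S, ∀ y ∈ S,
        (1 - (k : ℝ) / 2 ^ (n + 1)) * g x + ((k : ℝ) / 2 ^ (n + 1)) * g y ≤
          g ((1 - (k : ℝ) / 2 ^ (n + 1)) * x + ((k : ℝ) / 2 ^ (n + 1)) * y) := by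
      intro k hk x hx y hy
      set μ : ℝ := (k : ℝ) / 2 ^ n with hμdef
      have hμ0 : 0 ≤ μ := by positivity
      have hμ1 : μ ≤ 1 := by
        rw [hμdef, div_le_one (by positivity)]
        exact_mod_cast hk
      have hw : (1 - μ) * x + μ * y ∈ S := hS hx hy (by linarith) hμ0 (by ring)
      have h1 := ih k hk x hx y hy
      have h2 := hmid x hx _ hw
      have hpt : (x + ((1 - μ) * x + μ * y)) / 2 =
          (1 - (k : ℝ) / 2 ^ (n + 1)) * x + ((k : ℝ) / 2 ^ (n + 1)) * y := by
        rw [hμdef]; push_cast; ring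
      have hco : ((k : ℝ) / 2 ^ (n + 1)) = μ / 2 := by
        rw [hμdef]; push_cast; ring
      rw [hpt] at h2
      rw [hco] at h2
      rw [hco]
      calc (1 - μ / 2) * g x + (μ / 2) * g y
          = (g x + ((1 - μ) * g x + μ * g y)) / 2 := by ring
        _ ≤ (g x + g ((1 - μ) * x + μ * y)) / 2 := by linarith
        _ ≤ _ := h2
    intro k hk x hx y hy
    rcases le_or_gt k (2 ^ n) with h | h
    · exact key k h x hx y hy
    · have hk' : 2 ^ (n + 1) - k ≤ 2 ^ n := by omega
      have := key (2 ^ (n + 1) - k) hk' y hy x hx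
      have hc : ((2 ^ (n + 1) - k : ℕ) : ℝ) = 2 ^ (n + 1) - (k : ℝ) := by
        have : k ≤ 2 ^ (n + 1) := hk
        push_cast [this]; ring
      rw [hc] at this
      have e1 : (1 - (2 ^ (n + 1) - (k : ℝ)) / 2 ^ (n + 1)) = (k : ℝ) / 2 ^ (n + 1) := by
        field_simp; ring
      have e2 : ((2 ^ (n + 1) - (k : ℝ)) / 2 ^ (n + 1)) = 1 - (k : ℝ) / 2 ^ (n + 1) := by
        field_simp
      rw [e1, e2] at this
      calc (1 - (k : ℝ) / 2 ^ (n + 1)) * g x + ((k : ℝ) / 2 ^ (n + 1)) * g y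
          = ((k : ℝ) / 2 ^ (n + 1)) * g y + (1 - (k : ℝ) / 2 ^ (n + 1)) * g x := by ring
        _ ≤ g (((k : ℝ) / 2 ^ (n + 1)) * y + (1 - (k : ℝ) / 2 ^ (n + 1)) * x) := this
        _ = g ((1 - (k : ℝ) / 2 ^ (n + 1)) * x + ((k : ℝ) / 2 ^ (n + 1)) * y) := by
            ring_nf

/-- A continuous influence function (on its interval support) satisfying the
ratio condition has a concave logarithm on its support. -/
theorem ratio_condition_log_concave
    (f : ℝ → ℝ) (hf : ∀ y, 0 ≤ f y)
    (hord : Set.OrdConnected {y | 0 < f y})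
    (hcont : ContinuousOn f {y | 0 < f y})
    (hratio : ∀ a b c : ℝ, a ≤ b → 0 ≤ c → 0 < f a → 0 < f b →
      0 < f (a + c) → 0 < f (b + c) → f (b + c) * f a ≤ f (a + c) * f b)
    (x y l : ℝ) (hx : 0 < f x) (hy : 0 < f y) (hl0 : 0 ≤ l) (hl1 : l ≤ 1) :
    (1 - l) * Real.log (f x) + l * Real.log (f y) ≤
      Real.log (f ((1 - l) * x + l * y)) := by
  set S : Set ℝ := {y | 0 < f y} with hSdef
  have hS : Convex ℝ S := convex_iff_ordConnected.mpr hord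
  set g : ℝ → ℝ := fun t => Real.log (f t) with hgdef
  -- midpoint concavity of g on S
  have hmid : ∀ u ∈ S, ∀ v ∈ S, (g u + g v) / 2 ≤ g ((u + v) / 2) := by
    have base : ∀ u ∈ S, ∀ v ∈ S, u ≤ v → (g u + g v) / 2 ≤ g ((u + v) / 2) := by
      intro u hu v hv huv
      have hm : (u + v) / 2 ∈ S := by
        have := hS hu hv (by norm_num : (0:ℝ) ≤ 1/2) (by norm_num : (0:ℝ) ≤ 1/2) (by norm_num)
        have e : (1/2 : ℝ) • u + (1/2 : ℝ) • v = (u + v) / 2 := by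
          simp [smul_eq_mul]; ring
        rwa [e] at this
      have hu' : 0 < f u := hu
      have hv' : 0 < f v := hv
      have hm' : 0 < f ((u + v) / 2) := hm
      have hc : 0 ≤ (u + v) / 2 - u := by linarith
      have hab : u ≤ (u + v) / 2 := by linarith
      have e1 : u + ((u + v) / 2 - u) = (u + v) / 2 := by ring
      have e2 : (u + v) / 2 + ((u + v) / 2 - u) = v := by ring
      have := hratio u ((u + v) / 2) ((u + v) / 2 - u) hab hc hu' hm'
        (by rwa [e1]) (by rwa [e2])
      rw [e1, e2] at this
      -- f v * f u ≤ f m * f m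
      have hlog := Real.log_le_log (by positivity) this
      rw [Real.log_mul (ne_of_gt hv') (ne_of_gt hu'),
          Real.log_mul (ne_of_gt hm') (ne_of_gt hm')] at hlog
      simp only [hgdef]
      linarith
    intro u hu v hv
    rcases le_total u v with h | h
    · exact base u hu v hv h
    · have := base v hv u hu h
      rw [add_comm (g u), add_comm u v]
      exact this
  have hdy := midpoint_to_dyadic g S hS hmid
  have hxS : x ∈ S := hx
  have hyS : y ∈ S := hy
  -- dyadic approximation of l
  set u : ℕ → ℝ := fun n => (⌊l * 2 ^ n⌋₊ : ℝ) / 2 ^ n with hudef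
  have hun0 : ∀ n, 0 ≤ u n := fun n => by positivity
  have hunle : ∀ n, ⌊l * 2 ^ n⌋₊ ≤ 2 ^ n := by
    intro n
    have : l * 2 ^ n ≤ 2 ^ n := by nlinarith [pow_pos (by norm_num : (0:ℝ) < 2) n]
    calc ⌊l * 2 ^ n⌋₊ ≤ ⌊(2 : ℝ) ^ n⌋₊ := Nat.floor_le_floor this
      _ = 2 ^ n := by
          rw [show ((2:ℝ) ^ n) = ((2 ^ n : ℕ) : ℝ) by push_cast; ring, Nat.floor_natCast]
  have hule : ∀ n, u n ≤ l := by
    intro n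
    rw [hudef]
    rw [div_le_iff₀ (by positivity)]
    exact Nat.floor_le (by positivity)
  have hlge : ∀ n, l - 1 / 2 ^ n ≤ u n := by
    intro n
    have := Nat.lt_floor_add_one (l * 2 ^ n)
    rw [hudef]
    rw [le_div_iff₀ (by positivity : (0:ℝ) < 2 ^ n)]
    have h2 : (0:ℝ) < 2 ^ n := by positivity
    have hinv : (1 : ℝ) / 2 ^ n * 2 ^ n = 1 := by field_simp
    nlinarith [hinv]
  have hutend : Filter.Tendsto u Filter.atTop (nhds l) := by
    have h0 : Filter.Tendsto (fun n : ℕ => l - 1 / 2 ^ n) Filter.atTop (nhds l) := by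
      have : Filter.Tendsto (fun n : ℕ => (1:ℝ) / 2 ^ n) Filter.atTop (nhds 0) := by
        simp only [one_div, ← inv_pow]
        exact tendsto_pow_atTop_nhds_zero_of_lt_one (by norm_num) (by norm_num)
      have := Filter.Tendsto.const_sub l this
      simpa using this
    exact tendsto_of_tendsto_of_tendsto_of_le_of_le h0 tendsto_const_nhds hlge hule
  -- sequence of points
  set z : ℕ → ℝ := fun n => (1 - u n) * x + u n * y with hzdef
  have hzS : ∀ n, z n ∈ S := fun n =>
    hS hxS hyS (by linarith [hule n, hun0 n]) (hun0 n) (by ring)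
  have hztend : Filter.Tendsto z Filter.atTop (nhds ((1 - l) * x + l * y)) := by
    apply Filter.Tendsto.add
    · exact (Filter.Tendsto.const_sub 1 hutend).mul_const x
    · exact hutend.mul_const y
  have hzmem : (1 - l) * x + l * y ∈ S := hS hxS hyS (by linarith) hl0 (by ring)
  -- continuity of g on S
  have hgcont : ContinuousOn g S := hcont.log (fun t ht => ne_of_gt ht)
  have hgz : Filter.Tendsto (fun n => g (z n)) Filter.atTop
      (nhds (g ((1 - l) * x + l * y))) := by
    have hw : ContinuousWithinAt g S ((1 - l) * x + l * y) := hgcont _ hzmem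
    exact hw.tendsto.comp (tendsto_nhdsWithin_iff.mpr
      ⟨hztend, Filter.Eventually.of_forall hzS⟩)
  have hlhs : Filter.Tendsto (fun n => (1 - u n) * g x + u n * g y) Filter.atTop
      (nhds ((1 - l) * g x + l * g y)) := by
    apply Filter.Tendsto.add
    · exact (Filter.Tendsto.const_sub 1 hutend).mul_const (g x)
    · exact hutend.mul_const (g y)
  have hineq : ∀ n, (1 - u n) * g x + u n * g y ≤ g (z n) := by
    intro n
    have := hdy n ⌊l * 2 ^ n⌋₊ (hunle n) x hxS y hyS
    simpa [hudef, hzdef] using this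
  exact le_of_tendsto_of_tendsto' hlhs hgz hineq
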